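/- The map Ψ = ψ_2 ∘ ψ_1^{-1} : (0,1)^3 → (0,1)^3 satisfies, for every (y1, y2, y3) ∈ (0,1)^3, Ψ(y1, y2, y3) = ( y2 + (1-y1)(1-y2)y3 , y1·y2/(y2 + (1-y1)(1-y2)y3) , y1·y3/([1-(1-y1)y3]·[y2 + y3(1-y2)]) ), and Ψ is an involution, i.e., Ψ ∘ Ψ is the identity map on (0,1)^3. -/

import Mathlib

open Set

/-- The set `H = {(x₁,x₂,x₃) ∈ (0,∞)³ : min{x₁x₂, (1-x₁)(1-x₂)} > x₃}`. -/
def setH : Set (ℝ × ℝ × ℝ) :=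
  {x | 0 < x.1 ∧ 0 < x.2.1 ∧ 0 < x.2.2 ∧
    x.2.2 < x.1 * x.2.1 ∧ x.2.2 < (1 - x.1) * (1 - x.2.1)}

/-- The open unit cube `(0,1)³`. -/
def unitCube : Set (ℝ × ℝ × ℝ) := Set.Ioo 0 1 ×ˢ (Set.Ioo 0 1 ×ˢ Set.Ioo 0 1)

/-- The map `ψ₁`. -/
noncomputable def psi1 (x : ℝ × ℝ × ℝ) : ℝ × ℝ × ℝ :=
  (x.1, (x.1 * x.2.1 - x.2.2) / x.1,
   x.2.2 / ((1 - x.1) * (x.1 - x.1 * x.2.1 + x.2.2)))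

/-- The map `ψ₂`. -/
noncomputable def psi2 (x : ℝ × ℝ × ℝ) : ℝ × ℝ × ℝ :=
  (x.2.1, (x.1 * x.2.1 - x.2.2) / x.2.1,
   x.2.2 / ((1 - x.2.1) * (x.2.1 - x.1 * x.2.1 + x.2.2)))

/-- The explicit formula (2.4) for `Ψ`. -/
noncomputable def PsiMap (y : ℝ × ℝ × ℝ) : ℝ × ℝ × ℝ :=
  (y.2.1 + (1 - y.1) * (1 - y.2.1) * y.2.2,
   y.1 * y.2.1 / (y.2.1 + (1 - y.1) * (1 - y.2.1) * y.2.2),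
   y.1 * y.2.2 / ((1 - (1 - y.1) * y.2.2) * (y.2.1 + y.2.2 * (1 - y.2.1))))

/-- The map `Ψ = ψ₂ ∘ ψ₁⁻¹ : (0,1)³ → (0,1)³` is given by the explicit formula (2.4)
(i.e. `Ψ ∘ ψ₁ = ψ₂` on `H`), it maps `(0,1)³` into itself, and it is an involution. -/
theorem Psi_formula_and_involution :
    (∀ x ∈ setH, PsiMap (psi1 x) = psi2 x) ∧
    Set.MapsTo PsiMap unitCube unitCube ∧
    (∀ y ∈ unitCube, PsiMap (PsiMap y) = y) := by
  refine ⟨?_, ?_, ?_⟩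
  · rintro ⟨a, b, c⟩ ⟨ha, hb, hc, hab, hab'⟩
    have hOne : (0:ℝ) < (1 - a) * (1 - b) := lt_trans hc hab'
    have ha0 : a ≠ 0 := ha.ne'
    have hb0 : b ≠ 0 := hb.ne'
    have hD1 : a - a * b + c ≠ 0 := by
      rcases mul_pos_iff.mp hOne with ⟨h1, h2⟩ | ⟨h1, h2⟩
      · have : (0:ℝ) < a - a * b + c := by nlinarith
        exact this.ne'
      · have : a - a * b + c < 0 := by nlinarith
        exact this.ne
    have hD2 : b - a * b + c ≠ 0 := by
      rcases mul_pos_iff.mp hOne with ⟨h1, h2⟩ | ⟨h1, h2⟩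
      · have : (0:ℝ) < b - a * b + c := by nlinarith
        exact this.ne'
      · have : b - a * b + c < 0 := by nlinarith
        exact this.ne
    have h1a : (1:ℝ) - a ≠ 0 := by
      rcases mul_pos_iff.mp hOne with ⟨h1, h2⟩ | ⟨h1, h2⟩
      · exact h1.ne'
      · exact h1.ne
    have h1b : (1:ℝ) - b ≠ 0 := by
      rcases mul_pos_iff.mp hOne with ⟨h1, h2⟩ | ⟨h1, h2⟩
      · exact h2.ne'
      · exact h2.ne
    simp only [psi1, psi2, PsiMap, Prod.mk.injEq]
    have key : (a * b - c) / a +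
        (1 - a) * (1 - (a * b - c) / a) * (c / ((1 - a) * (a - a * b + c))) = b := by
      field_simp
      linear_combination c * (inv_mul_cancel₀ hD1)
    have k1 : 1 - (1 - a) * (c / ((1 - a) * (a - a * b + c))) = a * (1 - b) / (a - a * b + c) := by
      field_simp
      linear_combination (-1:ℝ) * (inv_mul_cancel₀ hD1)
    have k2 : (a * b - c) / a +
        (c / ((1 - a) * (a - a * b + c))) * (1 - (a * b - c) / a)
          = (b - a * b + c) / (1 - a) := by
      field_simp
      linear_combination c * (inv_mul_cancel₀ hD1)
    refine ⟨key, ?_, ?_⟩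
    · rw [key]
      field_simp
    · rw [k1, k2]
      have hD1' : a * (1 - b) + c ≠ 0 := by intro h; apply hD1; linarith
      have hD2' : (1 - a) * b + c ≠ 0 := by intro h; apply hD2; linarith
      field_simp
  · rintro ⟨a, b, c⟩ hmem
    simp only [unitCube, mem_prod, mem_Ioo] at hmem ⊢
    obtain ⟨⟨ha0, ha1⟩, ⟨hb0, hb1⟩, ⟨hc0, hc1⟩⟩ := hmem
    simp only [PsiMap]
    have h1a : (0:ℝ) < 1 - a := by linarith
    have h1b : (0:ℝ) < 1 - b := by linarith
    have h1c : (0:ℝ) < 1 - c := by linarith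
    have hA : (0:ℝ) < b + (1 - a) * (1 - b) * c := by positivity
    have hB : (0:ℝ) < 1 - (1 - a) * c := by nlinarith
    have hC : (0:ℝ) < b + c * (1 - b) := by positivity
    refine ⟨⟨hA, by nlinarith⟩, ⟨by positivity, ?_⟩, ⟨by positivity, ?_⟩⟩
    · rw [div_lt_one hA]; nlinarith
    · rw [div_lt_one (by positivity)]
      nlinarith [mul_pos h1a h1c, mul_pos hb0 h1c,
        mul_pos (mul_pos h1a h1c) (mul_pos hb0 h1c)]
  · rintro ⟨a, b, c⟩ hmem
    simp only [unitCube, mem_prod, mem_Ioo] at hmem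
    obtain ⟨⟨ha0, ha1⟩, ⟨hb0, hb1⟩, ⟨hc0, hc1⟩⟩ := hmem
    have h1a : (0:ℝ) < 1 - a := by linarith
    have h1b : (0:ℝ) < 1 - b := by linarith
    have hA : b + (1 - a) * (1 - b) * c ≠ 0 := by positivity
    have hB : (1:ℝ) - (1 - a) * c ≠ 0 := by nlinarith
    have hC : b + c * (1 - b) ≠ 0 := by positivity
    simp only [PsiMap, Prod.mk.injEq]
    have g1 : a * b / (b + (1 - a) * (1 - b) * c) +
        (1 - (b + (1 - a) * (1 - b) * c)) * (1 - a * b / (b + (1 - a) * (1 - b) * c)) *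
          (a * c / ((1 - (1 - a) * c) * (b + c * (1 - b)))) = a := by
      field_simp
      ring
    have k1 : 1 - (1 - (b + (1 - a) * (1 - b) * c)) *
        (a * c / ((1 - (1 - a) * c) * (b + c * (1 - b))))
          = (b + (1 - a) * (1 - b) * c) / (b + c * (1 - b)) := by
      field_simp
      ring
    have k2 : a * b / (b + (1 - a) * (1 - b) * c) +
        (a * c / ((1 - (1 - a) * c) * (b + c * (1 - b)))) *
          (1 - a * b / (b + (1 - a) * (1 - b) * c)) = a / (1 - (1 - a) * c) := by
      field_simp
      ring
    refine ⟨g1, ?_, ?_⟩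
    · rw [g1]
      field_simp
    · rw [k1, k2]
      field_simp
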